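/- For every graph G and positive integer p, the p-centered chromatic number satisfies χ_p(G) ≤ wcol*_{2^{p-2}}(G), where wcol*_s(G) is the minimum over linear orders π of the chromatic number of the graph G⟨π,s⟩ with edges between pairs in weak s-reachability. -/

import Mathlib

variable {V : Type*}

/-- Weak s-reachability. -/
def WReach (G : SimpleGraph V) (π : LinearOrder V) (s : ℕ) (v : V) : Set V :=
  letI := π
  {u | u ≤ v ∧ ∃ p : G.Walk v u, p.IsPath ∧ p.length ≤ s ∧
      ∀ w ∈ p.support, w ≠ v → w ≠ u → u < w}

/-- A `q`-centered coloring. -/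
def IsCenteredColoring (G : SimpleGraph V) (q : ℕ) {C : Type*} (c : V → C) : Prop :=
  ∀ W : Set V, W.Nonempty → (G.induce W).Connected →
    (∃ v ∈ W, ∀ u ∈ W, c u = c v → u = v) ∨ q ≤ (c '' W).ncard

/-- The `p`-centered chromatic number. -/
noncomputable def chiP (G : SimpleGraph V) (p : ℕ) : ℕ :=
  sInf {k | ∃ c : V → Fin k, IsCenteredColoring G p c}

/-- `wcol*_s(G)`: the minimum over linear orders `π` of the chromatic number of the
graph `G⟨π,s⟩` with edges between pairs in weak `s`-reachability. -/
noncomputable def wcolStar (G : SimpleGraph V) (s : ℕ) : ℕ :=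
  sInf {k | ∃ (π : LinearOrder V) (c : V → Fin k),
    ∀ u v : V, u ≠ v → (u ∈ WReach G π s v ∨ v ∈ WReach G π s u) → c u ≠ c v}

open SimpleGraph Walk

/-- Truncation of a walk to its first `n` edges (auxiliary). -/
def WalkTake {G : SimpleGraph V} : ∀ {a b : V}, G.Walk a b → ℕ → Σ c : V, G.Walk a c
  | _, _, .nil, _ => ⟨_, .nil⟩
  | _, _, .cons _ _, 0 => ⟨_, .nil⟩
  | _, _, .cons h q, n+1 => ⟨_, .cons h (WalkTake q n).2⟩

lemma WalkTake_length {G : SimpleGraph V} : ∀ {a b : V} (p : G.Walk a b) (n : ℕ),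
    (WalkTake p n).2.length = min n p.length
  | _, _, .nil, n => by simp [WalkTake]
  | _, _, .cons h q, 0 => by simp [WalkTake]
  | _, _, .cons h q, n+1 => by
      simp only [WalkTake, length_cons, WalkTake_length q n, Nat.min_def]
      split_ifs <;> omega

lemma WalkTake_support_sublist {G : SimpleGraph V} : ∀ {a b : V} (p : G.Walk a b) (n : ℕ),
    List.Sublist (WalkTake p n).2.support p.support
  | _, _, .nil, n => by simp [WalkTake]
  | _, _, .cons h q, 0 => by
      simp only [WalkTake, support_nil, support_cons]
      exact (List.nil_sublist _).cons₂ _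
  | _, _, .cons h q, n+1 => by
      simp only [WalkTake, support_cons]
      exact (WalkTake_support_sublist q n).cons₂ _

lemma WalkTake_isPath {G : SimpleGraph V} {a b : V} {p : G.Walk a b} (hp : p.IsPath) (n : ℕ) :
    (WalkTake p n).2.IsPath := by
  rw [isPath_def] at hp ⊢
  exact hp.sublist (WalkTake_support_sublist p n)

section
variable {G : SimpleGraph V} [π : LinearOrder V]

/-- If `m` is a minimum of the support of a short walk ending at `m`,
then `m` is weakly reachable from the start of the walk. -/
lemma mem_wreach_of_min {s : ℕ} {b m : V} (Q : G.Walk b m) (hlen : Q.length ≤ s)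
    (hmin : ∀ x ∈ Q.support, m ≤ x) : m ∈ WReach G π s b := by
  refine ⟨hmin b Q.start_mem_support, Q.bypass, Q.bypass_isPath, le_trans Q.length_bypass_le hlen,
    fun w hw _ hwm => ?_⟩
  exact lt_of_le_of_ne (hmin w (Q.support_bypass_subset hw)) (Ne.symm hwm)

/-- Any path of length at least `2^n - 1` (and at most `s`) contains a chain of `n+1`
vertices that are pairwise weakly `s`-reachable. -/
lemma chain_of_long_path {s : ℕ} (n : ℕ) : ∀ {a b : V} (Q : G.Walk a b), Q.IsPath →
    2 ^ n - 1 ≤ Q.length → Q.length ≤ s →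
    ∃ T : Finset V, T.card = n + 1 ∧ (∀ z ∈ T, z ∈ Q.support) ∧
      ∀ z1 ∈ T, ∀ z2 ∈ T, z1 < z2 → z1 ∈ WReach G π s z2 := by
  induction n with
  | zero =>
    intro a b Q _ _ _
    refine ⟨{a}, by simp, by simp [Q.start_mem_support], ?_⟩
    intro z1 h1 z2 h2 hlt
    simp only [Finset.mem_singleton] at h1 h2
    subst h1; subst h2; exact absurd hlt (lt_irrefl _)
  | succ n ih =>
    intro a b Q hQ hlow hupp
    obtain ⟨m, hmQ, hmin⟩ : ∃ m ∈ Q.support, ∀ x ∈ Q.support, m ≤ x := by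
      obtain ⟨m, hm, h⟩ := Q.support.toFinset.exists_min_image id
        ⟨a, by simp [Q.start_mem_support]⟩
      exact ⟨m, by simpa using hm, fun x hx => h x (by simpa using hx)⟩
    have key : ∀ (a' : V) (W : G.Walk m a'), W.IsPath → 2 ^ n ≤ W.length → W.length ≤ s →
        (∀ x ∈ W.support, m ≤ x) →
        ∃ T : Finset V, T.card = n + 2 ∧ (∀ z ∈ T, z ∈ W.support) ∧
          ∀ z1 ∈ T, ∀ z2 ∈ T, z1 < z2 → z1 ∈ WReach G π s z2 := by
      intro a' W hW hWlow hWupp hWmin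
      have hnil : ¬ W.Nil := by
        rw [not_nil_iff_lt_length]
        have : (0:ℕ) < 2 ^ n := Nat.pow_pos (by norm_num)
        omega
      obtain ⟨u', hadj, R, rfl⟩ := not_nil_iff.mp hnil
      rw [cons_isPath_iff] at hW
      rw [length_cons] at hWlow hWupp
      obtain ⟨T', hcard, hsub, hchain⟩ := ih R hW.1 (by omega) (by omega)
      have hmT' : m ∉ T' := fun h => hW.2 (hsub m h)
      refine ⟨insert m T', ?_, ?_, ?_⟩
      · rw [Finset.card_insert_of_notMem hmT', hcard]
      · intro z hz
        rcases Finset.mem_insert.mp hz with rfl | hz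
        · exact start_mem_support _
        · rw [support_cons]; exact List.mem_cons_of_mem _ (hsub z hz)
      · intro z1 h1 z2 h2 hlt
        rcases Finset.mem_insert.mp h1 with rfl | h1'
        · have hz2 : z2 ∈ T' := by
            rcases Finset.mem_insert.mp h2 with rfl | h; · exact absurd hlt (lt_irrefl _)
            · exact h
          have hz2W : z2 ∈ (cons hadj R).support := by
            rw [support_cons]; exact List.mem_cons_of_mem _ (hsub z2 hz2)
          refine mem_wreach_of_min ((cons hadj R).takeUntil z2 hz2W).reverse ?_ ?_
          · rw [length_reverse]
            exact le_trans (length_takeUntil_le _ _) (by simp only [length_cons]; omega)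
          · intro x hx
            rw [support_reverse, List.mem_reverse] at hx
            exact hWmin x (support_takeUntil_subset _ _ hx)
        · rcases Finset.mem_insert.mp h2 with rfl | h2'
          · have : z2 ≤ z1 := hWmin z1 (by
              rw [support_cons]; exact List.mem_cons_of_mem _ (hsub z1 h1'))
            exact absurd hlt (not_lt.mpr this)
          · exact hchain z1 h1' z2 h2' hlt
    have hlensum : (Q.takeUntil m hmQ).length + (Q.dropUntil m hmQ).length = Q.length := by
      have := congrArg Walk.length (Q.take_spec hmQ)
      rwa [length_append] at this
    have hpow : 2 ^ (n + 1) = 2 * 2 ^ n := by ring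
    by_cases hc2 : 2 ^ n ≤ (Q.dropUntil m hmQ).length
    · obtain ⟨T, hcard, hsub, hchain⟩ := key b (Q.dropUntil m hmQ) (hQ.dropUntil hmQ)
        hc2 (by omega) (fun x hx => hmin x (Q.support_dropUntil_subset hmQ hx))
      exact ⟨T, hcard, fun z hz => Q.support_dropUntil_subset hmQ (hsub z hz), hchain⟩
    · have hc1 : 2 ^ n ≤ (Q.takeUntil m hmQ).length := by
        have h1 : 0 < 2 ^ n := Nat.pow_pos (by norm_num)
        omega
      obtain ⟨T, hcard, hsub, hchain⟩ := key a (Q.takeUntil m hmQ).reverse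
        ((hQ.takeUntil hmQ).reverse) (by rw [length_reverse]; exact hc1)
        (by rw [length_reverse]; omega)
        (fun x hx => by
          rw [support_reverse, List.mem_reverse] at hx
          exact hmin x (Q.support_takeUntil_subset hmQ hx))
      refine ⟨T, hcard, fun z hz => ?_, hchain⟩
      have := hsub z hz
      rw [support_reverse, List.mem_reverse] at this
      exact Q.support_takeUntil_subset hmQ this

/-- A proper coloring of the weak-reachability graph `G⟨π, 2^(p-2)⟩` is `p`-centered. -/
lemma proper_isCentered [Fintype V] {k p : ℕ} (hp : 0 < p) {c : V → Fin k}
    (hc : ∀ u v : V, u ≠ v →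
      (u ∈ WReach G π (2 ^ (p - 2)) v ∨ v ∈ WReach G π (2 ^ (p - 2)) u) → c u ≠ c v) :
    IsCenteredColoring G p c := by
  intro W hne hconn
  by_cases huniq : ∃ v ∈ W, ∀ u ∈ W, c u = c v → u = v
  · exact Or.inl huniq
  right
  push_neg at huniq
  set s := 2 ^ (p - 2) with hs
  have hs1 : 1 ≤ s := Nat.one_le_two_pow
  obtain ⟨u, huW, humin⟩ := Set.exists_min_image W id W.toFinite hne
  simp only [id] at humin
  obtain ⟨w, hwW, hcw, hwu⟩ := huniq u huW
  obtain ⟨P0⟩ : (G.induce W).Reachable ⟨u, huW⟩ ⟨w, hwW⟩ := hconn ⟨u, huW⟩ ⟨w, hwW⟩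
  let P : G.Walk u w := (P0.map (Embedding.induce W).toHom).bypass
  have hPpath : P.IsPath := bypass_isPath _
  have hPsub : ∀ x ∈ P.support, x ∈ W := by
    intro x hx
    have h2 := support_bypass_subset _ hx
    erw [Walk.support_map] at h2
    obtain ⟨y, _, rfl⟩ := List.mem_map.mp h2
    exact y.2
  have hPmin : ∀ x ∈ P.support, u ≤ x := fun x hx => humin x (hPsub x hx)
  have hPlong : s + 1 ≤ P.length := by
    by_contra h
    push_neg at h
    have hmem : u ∈ WReach G π s w := by
      refine mem_wreach_of_min P.reverse ?_ ?_
      · rw [length_reverse]; omega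
      · intro x hx
        rw [support_reverse, List.mem_reverse] at hx
        exact hPmin x hx
    exact hc u w (Ne.symm hwu) (Or.inl hmem) hcw.symm
  set Q : G.Walk u (WalkTake P s).1 := (WalkTake P s).2 with hQdef
  have hQlen : Q.length = s := by rw [hQdef, WalkTake_length]; omega
  have hQpath : Q.IsPath := WalkTake_isPath hPpath s
  have hQsub : ∀ x ∈ Q.support, x ∈ P.support :=
    fun x hx => (WalkTake_support_sublist P s).subset hx
  have hQnil : ¬ Q.Nil := by rw [not_nil_iff_lt_length]; omega
  obtain ⟨u1, hadj, R, hQR⟩ := not_nil_iff.mp hQnil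
  have hRfacts : R.IsPath ∧ u ∉ R.support := by
    have := hQpath; rw [hQR, cons_isPath_iff] at this; exact this
  have hRlen : R.length + 1 = s := by rw [hQR, length_cons] at hQlen; exact hQlen
  obtain ⟨T', hcard, hsub, hchain⟩ := chain_of_long_path (s := s) (p - 2) R hRfacts.1
    (by omega) (by omega)
  have hT'Q : ∀ z ∈ T', z ∈ Q.support := by
    intro z hz; rw [hQR, support_cons]; exact List.mem_cons_of_mem _ (hsub z hz)
  have huT' : u ∉ T' := fun h => hRfacts.2 (hsub u h)
  have hreachu : ∀ z ∈ T', u ∈ WReach G π s z := by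
    intro z hz
    refine mem_wreach_of_min (Q.takeUntil z (hT'Q z hz)).reverse ?_ ?_
    · rw [length_reverse]; exact le_trans (length_takeUntil_le _ _) (le_of_eq hQlen)
    · intro x hx
      rw [support_reverse, List.mem_reverse] at hx
      exact hPmin x (hQsub x (support_takeUntil_subset _ _ hx))
  have hTW : ∀ z ∈ insert u T', z ∈ W := by
    intro z hz
    rcases Finset.mem_insert.mp hz with rfl | hz'
    · exact huW
    · exact hPsub z (hQsub z (hT'Q z hz'))
  have hinj : Set.InjOn c ↑(insert u T') := by
    intro x hx y hy hxy
    by_contra hne'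
    simp only [Finset.coe_insert, Set.mem_insert_iff, Finset.mem_coe] at hx hy
    have hcon : c x ≠ c y := by
      rcases hx with rfl | hx'
      · rcases hy with rfl | hy'
        · exact absurd rfl hne'
        · exact hc x y hne' (Or.inl (hreachu y hy'))
      · rcases hy with rfl | hy'
        · exact Ne.symm (hc y x (Ne.symm hne') (Or.inl (hreachu x hx')))
        · rcases lt_trichotomy x y with hlt | heq | hlt
          · exact hc x y hne' (Or.inl (hchain x hx' y hy' hlt))
          · exact absurd heq hne'
          · exact Ne.symm (hc y x (Ne.symm hne') (Or.inl (hchain y hy' x hx' hlt)))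
    exact hcon hxy
  have hcardT : (insert u T').card = p - 2 + 2 := by
    rw [Finset.card_insert_of_notMem huT', hcard]
  calc p ≤ p - 2 + 2 := by omega
    _ = (c '' ↑(insert u T')).ncard := by
        rw [Set.ncard_image_of_injOn hinj, Set.ncard_coe_finset, hcardT]
    _ ≤ (c '' W).ncard := by
        refine Set.ncard_le_ncard (Set.image_mono ?_) (W.toFinite.image c)
        intro z hz
        exact hTW z (by simpa using hz)

end

theorem stmt13 [Fintype V] (G : SimpleGraph V) (p : ℕ) (hp : 0 < p) :
    chiP G p ≤ wcolStar G (2 ^ (p - 2)) := by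
  have hSne : {k | ∃ (π : LinearOrder V) (c : V → Fin k),
      ∀ u v : V, u ≠ v →
        (u ∈ WReach G π (2 ^ (p - 2)) v ∨ v ∈ WReach G π (2 ^ (p - 2)) u) →
        c u ≠ c v}.Nonempty := by
    refine ⟨Fintype.card V,
      LinearOrder.lift' (Fintype.equivFin V) (Fintype.equivFin V).injective,
      Fintype.equivFin V, fun u v huv _ h => huv ((Fintype.equivFin V).injective h)⟩
  obtain ⟨π, c, hc⟩ := Nat.sInf_mem hSne
  refine Nat.sInf_le ?_
  exact ⟨c, proper_isCentered (π := π) hp hc⟩
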